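/- For every natural number k ≥ 1 and every natural number d there exists a (2k−2)-strong tournament in which every vertex has in-degree at least d and out-degree at least d, but which is not k-linked. -/

import Mathlib

/-- `l` is a directed path from `x` to `y` in the digraph with arc relation `A`:
a list of pairwise distinct vertices, starting at `x`, ending at `y`, with
consecutive vertices joined by arcs. -/
def IsDipath {V : Type*} (A : V → V → Prop) (x y : V) (l : List V) : Prop :=
  l.Chain' A ∧ l.Nodup ∧ l.head? = some x ∧ l.getLast? = some y

/-- Every ordered pair of distinct vertices of `S` is joined by a directed path
all of whose vertices lie in `S`. -/
def StronglyConnectedOn {V : Type*} (A : V → V → Prop) (S : Set V) : Prop :=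
  ∀ x ∈ S, ∀ y ∈ S, x ≠ y →
    ∃ l : List V, IsDipath A x y l ∧ ∀ v ∈ l, v ∈ S

/-- A digraph is `k`-strong if it has at least `k+1` vertices and deleting any
set of at most `k-1` vertices (i.e. fewer than `k` vertices) leaves it strongly
connected. -/
def IsKStrong {V : Type*} [Fintype V] (A : V → V → Prop) (k : ℕ) : Prop :=
  k + 1 ≤ Fintype.card V ∧
    ∀ S : Finset V, S.card < k → StronglyConnectedOn A {v | v ∉ S}

/-- A digraph is `k`-linked if for every choice of `2k` distinct vertices
`x 0, …, x (k-1), y 0, …, y (k-1)` there are pairwise vertex-disjoint directed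
paths `P i` from `x i` to `y i`. -/
def IsKLinked {V : Type*} (A : V → V → Prop) (k : ℕ) : Prop :=
  ∀ x y : Fin k → V,
    Function.Injective x → Function.Injective y → (∀ i j, x i ≠ y j) →
      ∃ P : Fin k → List V,
        (∀ i, IsDipath A (x i) (y i) (P i)) ∧
        ∀ i j, i ≠ j → ∀ v, v ∈ P i → v ∉ P j

/-- A tournament: loopless, and between any two distinct vertices exactly one arc. -/
def IsTournament {V : Type*} (A : V → V → Prop) : Prop :=
  (∀ v, ¬ A v v) ∧ ∀ x y : V, x ≠ y → (A x y ↔ ¬ A y x)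

/-- A semicomplete digraph: loopless, and between any two distinct vertices at
least one arc. -/
def IsSemicomplete {V : Type*} (A : V → V → Prop) : Prop :=
  (∀ v, ¬ A v v) ∧ ∀ x y : V, x ≠ y → (A x y ∨ A y x)

/-- The out-degree of `v`. -/
noncomputable def outDeg {V : Type*} (A : V → V → Prop) (v : V) : ℕ :=
  {y | A v y}.ncard

/-- The in-degree of `v`. -/
noncomputable def inDeg {V : Type*} (A : V → V → Prop) (v : V) : ℕ :=
  {y | A y v}.ncard

/-- `X = {x 0,…,x (p-1)}` anchors `Y = {y 0,…,y (p-1)}` in the digraph `A`: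
for every permutation `π` of the indices there are pairwise vertex-disjoint
directed paths `Q i` from `x i` to `y (π i)`. -/
def Anchors {V : Type*} {p : ℕ} (A : V → V → Prop) (x y : Fin p → V) : Prop :=
  ∀ π : Equiv.Perm (Fin p),
    ∃ Q : Fin p → List V,
      (∀ i, IsDipath A (x i) (y (π i)) (Q i)) ∧
      ∀ i j, i ≠ j → ∀ v, v ∈ Q i → v ∉ Q j

namespace TTaux

def pt (m f a : ℕ) : ℕ := if a < m then 0 else if a < m + f then 1 else 2

lemma pt_lt (m f a : ℕ) : pt m f a < 3 := by unfold pt; split_ifs <;> omega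

lemma pt0 {m f a : ℕ} : pt m f a = 0 ↔ a < m := by
  unfold pt; split_ifs <;> (try simp) <;> omega

lemma pt1 {m f a : ℕ} : pt m f a = 1 ↔ (m ≤ a ∧ a < m + f) := by
  unfold pt; split_ifs <;> (try simp) <;> omega

lemma pt2 {m f a : ℕ} : pt m f a = 2 ↔ m + f ≤ a := by
  unfold pt; split_ifs <;> (try simp) <;> omega

def arc (D m f a b : ℕ) : Prop :=
  if pt m f a = pt m f b then
    if pt m f a = 1 then a < b
    else (a < b ∧ b - a ≤ D) ∨ (b < a ∧ a - b > D)
  else pt m f b = (pt m f a + 1) % 3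

lemma arc_irrefl (D m f a : ℕ) : ¬ arc D m f a a := by
  unfold arc; rw [if_pos rfl]; split_ifs <;> omega

lemma arc_asymm {D m f a b : ℕ} (hne : a ≠ b) : arc D m f a b ↔ ¬ arc D m f b a := by
  unfold arc
  by_cases h : pt m f a = pt m f b
  · rw [if_pos h, if_pos h.symm, ← h]
    split_ifs <;> omega
  · rw [if_neg h, if_neg (fun hh => h hh.symm)]
    have h1 := pt_lt m f a
    have h2 := pt_lt m f b
    omega

lemma arc_fromZ {D m f a b : ℕ} (h : arc D m f a b) (ha : a < m) :
    b < m ∨ (m ≤ b ∧ b < m + f) := by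
  have h1 : pt m f a = 0 := pt0.2 ha
  by_cases hq : pt m f b = 0
  · exact Or.inl (pt0.1 hq)
  by_cases hq1 : pt m f b = 1
  · exact Or.inr (pt1.1 hq1)
  exfalso
  unfold arc at h
  rw [if_neg (by omega)] at h
  omega

lemma mem_of_head? {V : Type*} {l : List V} {a : V} (h : l.head? = some a) : a ∈ l :=
  List.mem_of_mem_head? (by simp [h, Option.mem_def])

lemma mem_of_getLast? {V : Type*} {l : List V} {a : V} (h : l.getLast? = some a) : a ∈ l := by
  rcases List.mem_getLast?_eq_getLast (l := l) (x := a) (by simp [h, Option.mem_def]) with ⟨h1, rfl⟩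
  exact List.getLast_mem h1

lemma stay {n m f D : ℕ} :
    ∀ l : List (Fin n), l.Chain' (fun u w : Fin n => arc D m f u.val w.val) →
      (∀ v ∈ l, pt m f (v : ℕ) ≠ 1) →
      ∀ a : Fin n, l.head? = some a → (a : ℕ) < m → ∀ v ∈ l, (v : ℕ) < m := by
  intro l
  induction l with
  | nil => simp
  | cons b t ih =>
    intro hc hF a ha hm v hv
    have hb : b = a := by simpa using ha
    subst hb
    cases t with
    | nil =>
      simp only [List.mem_singleton] at hv; subst hv; exact hm
    | cons c t' =>
      rw [List.Chain', List.isChain_cons_cons] at hc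
      have hcm : (c : ℕ) < m := by
        rcases arc_fromZ hc.1 hm with h | h
        · exact h
        · exact absurd (pt1.2 h) (hF c (by simp))
      rcases List.mem_cons.1 hv with rfl | hv'
      · exact hm
      · exact ih hc.2 (fun w hw => hF w (List.mem_cons_of_mem _ hw)) c rfl hcm v hv'

lemma tourney (D m f n : ℕ) :
    IsTournament (fun u w : Fin n => arc D m f u.val w.val) := by
  constructor
  · intro v; exact arc_irrefl D m f v.val
  · intro x y hxy
    exact arc_asymm (fun h => hxy (Fin.ext h))

lemma notlinked (k d D m f n : ℕ) (hD : D = 2*d+k+2) (hm : m = 2*D+1) (hf : f = 2*k-2)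
    (hn : n = m + f + m) (hk : 1 ≤ k) :
    ¬ IsKLinked (fun u w : Fin n => arc D m f u.val w.val) k := by
  intro hL
  obtain ⟨xs, hxs⟩ : ∃ xs : Fin k → Fin n,
      ∀ i, (xs i : ℕ) = if i.val < k - 1 then m + i.val else 0 :=
    ⟨fun i => ⟨if i.val < k - 1 then m + i.val else 0,
      by have := i.isLt; split_ifs <;> omega⟩, fun i => rfl⟩
  obtain ⟨ys, hys⟩ : ∃ ys : Fin k → Fin n,
      ∀ i, (ys i : ℕ) = if i.val < k - 1 then m + (k - 1) + i.val else m + f :=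
    ⟨fun i => ⟨if i.val < k - 1 then m + (k - 1) + i.val else m + f,
      by have := i.isLt; split_ifs <;> omega⟩, fun i => rfl⟩
  have hxinj : Function.Injective xs := by
    intro i j h
    have hh := congrArg Fin.val h
    rw [hxs i, hxs j] at hh
    have hi := i.isLt; have hj := j.isLt
    split_ifs at hh <;> exact Fin.ext (by omega)
  have hyinj : Function.Injective ys := by
    intro i j h
    have hh := congrArg Fin.val h
    rw [hys i, hys j] at hh
    have hi := i.isLt; have hj := j.isLt
    split_ifs at hh <;> exact Fin.ext (by omega)
  have hxy : ∀ i j, xs i ≠ ys j := by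
    intro i j h
    have hh := congrArg Fin.val h
    rw [hxs i, hys j] at hh
    have hi := i.isLt; have hj := j.isLt
    split_ifs at hh <;> omega
  obtain ⟨P, hP, hdisj⟩ := hL xs ys hxinj hyinj hxy
  obtain ⟨i0, hi0⟩ : ∃ i0 : Fin k, (i0 : ℕ) = k - 1 := ⟨⟨k - 1, by omega⟩, rfl⟩
  have hnoF : ∀ v ∈ P i0, pt m f (v : ℕ) ≠ 1 := by
    intro v hv hp1
    obtain ⟨h1, h2⟩ := pt1.1 hp1
    by_cases hj : (v : ℕ) - m < k - 1
    · obtain ⟨jj, hjj⟩ : ∃ jj : Fin k, (jj : ℕ) = (v : ℕ) - m := ⟨⟨(v : ℕ) - m, by omega⟩, rfl⟩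
      have hje : v = xs jj := by
        apply Fin.ext
        rw [hxs, hjj, if_pos (by omega)]
        omega
      have hne : i0 ≠ jj := by
        intro h
        rw [Fin.ext_iff, hi0, hjj] at h
        omega
      have hmem := mem_of_head? (hP jj).2.2.1
      rw [← hje] at hmem
      exact hdisj _ _ hne v hv hmem
    · obtain ⟨jj, hjj⟩ : ∃ jj : Fin k, (jj : ℕ) = (v : ℕ) - m - (k - 1) :=
        ⟨⟨(v : ℕ) - m - (k - 1), by omega⟩, rfl⟩
      have hje : v = ys jj := by
        apply Fin.ext
        rw [hys, hjj, if_pos (by omega)]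
        omega
      have hne : i0 ≠ jj := by
        intro h
        rw [Fin.ext_iff, hi0, hjj] at h
        omega
      have hmem := mem_of_getLast? (hP jj).2.2.2
      rw [← hje] at hmem
      exact hdisj _ _ hne v hv hmem
  have hstay := stay (P i0) (hP _).1 hnoF (xs i0) (hP _).2.2.1
    (by rw [hxs, hi0, if_neg (by omega)]; omega)
  have hlast : ys i0 ∈ P i0 := mem_of_getLast? (hP _).2.2.2
  have hcon := hstay _ hlast
  rw [hys, hi0, if_neg (by omega)] at hcon
  omega

lemma arc_ZF {D m f a b : ℕ} (ha : a < m) (hb1 : m ≤ b) (hb2 : b < m + f) :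
    arc D m f a b := by
  have h1 : pt m f a = 0 := pt0.2 ha
  have h2 : pt m f b = 1 := pt1.2 ⟨hb1, hb2⟩
  unfold arc; rw [if_neg (by omega)]; omega

lemma arc_FB {D m f a b : ℕ} (ha1 : m ≤ a) (ha2 : a < m + f) (hb : m + f ≤ b) :
    arc D m f a b := by
  have h1 : pt m f a = 1 := pt1.2 ⟨ha1, ha2⟩
  have h2 : pt m f b = 2 := pt2.2 hb
  unfold arc; rw [if_neg (by omega)]; omega

lemma arc_BZ {D m f a b : ℕ} (ha : m + f ≤ a) (hb : b < m) :
    arc D m f a b := by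
  have h1 : pt m f a = 2 := pt2.2 ha
  have h2 : pt m f b = 0 := pt0.2 hb
  unfold arc; rw [if_neg (by omega)]; omega

lemma dipath2 {V : Type*} {A : V → V → Prop} {x y : V} (h : A x y) (hne : x ≠ y) :
    IsDipath A x y [x, y] :=
  ⟨by simp [List.Chain', List.isChain_cons_cons, h], by simp [hne], rfl, by simp⟩

lemma dipath3 {V : Type*} {A : V → V → Prop} {x u y : V} (a1 : A x u) (a2 : A u y)
    (n1 : x ≠ u) (n2 : x ≠ y) (n3 : u ≠ y) : IsDipath A x y [x, u, y] :=
  ⟨by simp [List.Chain', List.isChain_cons_cons, a1, a2], by simp [n1, n2, n3], rfl, by simp⟩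

lemma dipath4 {V : Type*} {A : V → V → Prop} {x u w y : V} (a1 : A x u) (a2 : A u w)
    (a3 : A w y) (n1 : x ≠ u) (n2 : x ≠ w) (n3 : x ≠ y) (n4 : u ≠ w) (n5 : u ≠ y)
    (n6 : w ≠ y) : IsDipath A x y [x, u, w, y] :=
  ⟨by simp [List.Chain', List.isChain_cons_cons, a1, a2, a3], by simp [n1, n2, n3, n4, n5, n6], rfl, by simp⟩

lemma exists_not_mem {n t : ℕ} (S : Finset (Fin n)) (g : Fin t → Fin n)
    (hg : Function.Injective g) (h : S.card < t) : ∃ i, g i ∉ S := by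
  by_contra h'
  push_neg at h'
  have hsub : Finset.univ.image g ⊆ S := by
    intro a ha
    rcases Finset.mem_image.1 ha with ⟨i, _, rfl⟩
    exact h' i
  have := Finset.card_le_card hsub
  rw [Finset.card_image_of_injective _ hg, Finset.card_univ, Fintype.card_fin] at this
  omega

lemma strong (k d D m f n : ℕ) (hD : D = 2*d+k+2) (hm : m = 2*D+1) (hf : f = 2*k-2)
    (hn : n = m + f + m) (hk : 1 ≤ k) :
    IsKStrong (fun u w : Fin n => arc D m f u.val w.val) (2 * k - 2) := by
  constructor
  · rw [Fintype.card_fin]; omega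
  intro S hS x hx y hy hxy
  have hSf : S.card < f := by omega
  have hf1 : 1 ≤ f := by omega
  obtain ⟨zv, hjz, hz1⟩ : ∃ z : Fin n, z ∉ S ∧ (z : ℕ) < m := by
    obtain ⟨j, hj⟩ := exists_not_mem S (fun j : Fin m => (⟨j.val, by omega⟩ : Fin n))
      (fun i j h => Fin.ext (by simpa using congrArg Fin.val h)) (by omega)
    exact ⟨_, hj, j.isLt⟩
  obtain ⟨fv, hjf, hf2, hf3⟩ : ∃ z : Fin n, z ∉ S ∧ m ≤ (z : ℕ) ∧ (z : ℕ) < m + f := by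
    obtain ⟨j, hj⟩ := exists_not_mem S
      (fun j : Fin f => (⟨m + j.val, by have := j.isLt; omega⟩ : Fin n))
      (fun i j h => Fin.ext (by simpa using congrArg Fin.val h)) (by omega)
    exact ⟨_, hj, by show m ≤ m + j.val; omega, by have := j.isLt; show m + j.val < m + f; omega⟩
  obtain ⟨bv, hjb, hb2⟩ : ∃ z : Fin n, z ∉ S ∧ m + f ≤ (z : ℕ) := by
    obtain ⟨j, hj⟩ := exists_not_mem S
      (fun j : Fin m => (⟨m + f + j.val, by have := j.isLt; omega⟩ : Fin n))
      (fun i j h => Fin.ext (by simpa using congrArg Fin.val h)) (by omega)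
    exact ⟨_, hj, by show m + f ≤ m + f + j.val; omega⟩
  simp only [Set.mem_setOf_eq] at hx hy
  have hxn := x.isLt
  have hyn := y.isLt
  by_cases hx0 : (x : ℕ) < m
  · by_cases hy0 : (y : ℕ) < m
    · refine ⟨[x, fv, bv, y], dipath4 (arc_ZF hx0 hf2 hf3)
        (arc_FB hf2 hf3 hb2) (arc_BZ hb2 hy0)
        (Fin.ne_of_val_ne (by omega)) (Fin.ne_of_val_ne (by omega)) hxy
        (Fin.ne_of_val_ne (by omega)) (Fin.ne_of_val_ne (by omega))
        (Fin.ne_of_val_ne (by omega)), ?_⟩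
      intro v hv
      simp only [List.mem_cons, List.mem_singleton, List.not_mem_nil, or_false] at hv
      simp only [Set.mem_setOf_eq]
      rcases hv with rfl | rfl | rfl | rfl
      exacts [hx, hjf, hjb, hy]
    · by_cases hy1 : (y : ℕ) < m + f
      · refine ⟨[x, y], dipath2 (arc_ZF hx0 (by omega) hy1) hxy, ?_⟩
        intro v hv
        simp only [List.mem_cons, List.not_mem_nil, or_false, List.mem_singleton] at hv
        simp only [Set.mem_setOf_eq]
        rcases hv with rfl | rfl
        exacts [hx, hy]
      · refine ⟨[x, fv, y], dipath3 (arc_ZF hx0 hf2 hf3) (arc_FB hf2 hf3 (by omega))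
          (Fin.ne_of_val_ne (by omega)) hxy (Fin.ne_of_val_ne (by omega)), ?_⟩
        intro v hv
        simp only [List.mem_cons, List.not_mem_nil, or_false, List.mem_singleton] at hv
        simp only [Set.mem_setOf_eq]
        rcases hv with rfl | rfl | rfl
        exacts [hx, hjf, hy]
  · by_cases hx1 : (x : ℕ) < m + f
    · by_cases hy0 : (y : ℕ) < m
      · refine ⟨[x, bv, y], dipath3 (arc_FB (by omega) hx1 hb2) (arc_BZ hb2 hy0)
          (Fin.ne_of_val_ne (by omega)) hxy (Fin.ne_of_val_ne (by omega)), ?_⟩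
        intro v hv
        simp only [List.mem_cons, List.not_mem_nil, or_false, List.mem_singleton] at hv
        simp only [Set.mem_setOf_eq]
        rcases hv with rfl | rfl | rfl
        exacts [hx, hjb, hy]
      · by_cases hy1 : (y : ℕ) < m + f
        · refine ⟨[x, bv, zv, y], dipath4 (arc_FB (by omega) hx1 hb2) (arc_BZ hb2 hz1)
            (arc_ZF hz1 (by omega) hy1)
            (Fin.ne_of_val_ne (by omega)) (Fin.ne_of_val_ne (by omega)) hxy
            (Fin.ne_of_val_ne (by omega)) (Fin.ne_of_val_ne (by omega))
            (Fin.ne_of_val_ne (by omega)), ?_⟩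
          intro v hv
          simp only [List.mem_cons, List.mem_singleton, List.not_mem_nil, or_false] at hv
          simp only [Set.mem_setOf_eq]
          rcases hv with rfl | rfl | rfl | rfl
          exacts [hx, hjb, hjz, hy]
        · refine ⟨[x, y], dipath2 (arc_FB (by omega) hx1 (by omega)) hxy, ?_⟩
          intro v hv
          simp only [List.mem_cons, List.not_mem_nil, or_false, List.mem_singleton] at hv
          simp only [Set.mem_setOf_eq]
          rcases hv with rfl | rfl
          exacts [hx, hy]
    · by_cases hy0 : (y : ℕ) < m
      · refine ⟨[x, y], dipath2 (arc_BZ (by omega) hy0) hxy, ?_⟩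
        intro v hv
        simp only [List.mem_cons, List.not_mem_nil, or_false, List.mem_singleton] at hv
        simp only [Set.mem_setOf_eq]
        rcases hv with rfl | rfl
        exacts [hx, hy]
      · by_cases hy1 : (y : ℕ) < m + f
        · refine ⟨[x, zv, y], dipath3 (arc_BZ (by omega) hz1) (arc_ZF hz1 (by omega) hy1)
            (Fin.ne_of_val_ne (by omega)) hxy (Fin.ne_of_val_ne (by omega)), ?_⟩
          intro v hv
          simp only [List.mem_cons, List.not_mem_nil, or_false, List.mem_singleton] at hv
          simp only [Set.mem_setOf_eq]
          rcases hv with rfl | rfl | rfl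
          exacts [hx, hjz, hy]
        · refine ⟨[x, zv, fv, y], dipath4 (arc_BZ (by omega) hz1)
            (arc_ZF hz1 hf2 hf3) (arc_FB hf2 hf3 (by omega))
            (Fin.ne_of_val_ne (by omega)) (Fin.ne_of_val_ne (by omega)) hxy
            (Fin.ne_of_val_ne (by omega)) (Fin.ne_of_val_ne (by omega))
            (Fin.ne_of_val_ne (by omega)), ?_⟩
          intro v hv
          simp only [List.mem_cons, List.mem_singleton, List.not_mem_nil, or_false] at hv
          simp only [Set.mem_setOf_eq]
          rcases hv with rfl | rfl | rfl | rfl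
          exacts [hx, hjz, hjf, hy]

lemma arc_same {D m f a b : ℕ} (h : pt m f a = pt m f b) (h1 : pt m f a ≠ 1)
    (hs : (a < b ∧ b - a ≤ D) ∨ (b < a ∧ a - b > D)) : arc D m f a b := by
  unfold arc; rw [if_pos h, if_neg h1]; exact hs

lemma le_ncard {n d : ℕ} {T : Set (Fin n)} (g : Fin d → Fin n)
    (hg : Function.Injective g) (h : ∀ i, g i ∈ T) : d ≤ T.ncard := by
  have h1 : Set.range g ⊆ T := by rintro _ ⟨i, rfl⟩; exact h i
  have h2 := Set.ncard_le_ncard h1 (Set.toFinite T)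
  rw [← Set.image_univ, Set.ncard_image_of_injective _ hg, Set.ncard_univ,
    Nat.card_eq_fintype_card, Fintype.card_fin] at h2
  exact h2

lemma indeg_ge (k d D m f n : ℕ) (hD : D = 2*d+k+2) (hm : m = 2*D+1) (hf : f = 2*k-2)
    (hn : n = m + f + m) (v : Fin n) :
    d ≤ inDeg (fun u w : Fin n => arc D m f u.val w.val) v := by
  unfold inDeg
  have hvn := v.isLt
  by_cases hv0 : (v : ℕ) < m
  · refine le_ncard (fun i => ⟨if d ≤ (v : ℕ) then (v : ℕ) - 1 - i.val
      else (v : ℕ) + D + 1 + i.val, by have := i.isLt; split_ifs <;> omega⟩) ?_ ?_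
    · intro i j h
      have hh := congrArg Fin.val h
      simp only at hh
      split_ifs at hh <;> exact Fin.ext (by have := i.isLt; have := j.isLt; omega)
    · intro i
      have hi := i.isLt
      simp only [Set.mem_setOf_eq]
      refine arc_same ?_ ?_ ?_
      · rw [pt0.2 (by split_ifs <;> omega), pt0.2 hv0]
      · rw [pt0.2 (by split_ifs <;> omega)]; omega
      · split_ifs with h <;> [left; right] <;> constructor <;> omega
  · by_cases hv1 : (v : ℕ) < m + f
    · refine le_ncard (fun i => ⟨i.val, by have := i.isLt; omega⟩) ?_ ?_
      · intro i j h; exact Fin.ext (by simpa using congrArg Fin.val h)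
      · intro i
        have hi := i.isLt
        exact show arc D m f i.val v.val from arc_ZF (by omega) (by omega) hv1
    · refine le_ncard (fun i => ⟨if m + f + d ≤ (v : ℕ) then (v : ℕ) - 1 - i.val
        else (v : ℕ) + D + 1 + i.val, by have := i.isLt; split_ifs <;> omega⟩) ?_ ?_
      · intro i j h
        have hh := congrArg Fin.val h
        simp only at hh
        split_ifs at hh <;> exact Fin.ext (by have := i.isLt; have := j.isLt; omega)
      · intro i
        have hi := i.isLt
        simp only [Set.mem_setOf_eq]
        refine arc_same ?_ ?_ ?_
        · rw [pt2.2 (by split_ifs <;> omega), pt2.2 (by omega)]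
        · rw [pt2.2 (by split_ifs <;> omega)]; omega
        · split_ifs with h <;> [left; right] <;> constructor <;> omega

lemma outdeg_ge (k d D m f n : ℕ) (hD : D = 2*d+k+2) (hm : m = 2*D+1) (hf : f = 2*k-2)
    (hn : n = m + f + m) (v : Fin n) :
    d ≤ outDeg (fun u w : Fin n => arc D m f u.val w.val) v := by
  unfold outDeg
  have hvn := v.isLt
  by_cases hv0 : (v : ℕ) < m
  · refine le_ncard (fun i => ⟨if (v : ℕ) + d ≤ 2*D then (v : ℕ) + 1 + i.val
      else i.val, by have := i.isLt; split_ifs <;> omega⟩) ?_ ?_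
    · intro i j h
      have hh := congrArg Fin.val h
      simp only at hh
      split_ifs at hh <;> exact Fin.ext (by have := i.isLt; have := j.isLt; omega)
    · intro i
      have hi := i.isLt
      simp only [Set.mem_setOf_eq]
      refine arc_same ?_ ?_ ?_
      · rw [pt0.2 hv0, pt0.2 (by split_ifs <;> omega)]
      · rw [pt0.2 hv0]; omega
      · split_ifs with h <;> [left; right] <;> constructor <;> omega
  · by_cases hv1 : (v : ℕ) < m + f
    · refine le_ncard (fun i => ⟨m + f + i.val, by have := i.isLt; omega⟩) ?_ ?_
      · intro i j h; exact Fin.ext (by simpa using congrArg Fin.val h)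
      · intro i
        have hi := i.isLt
        exact show arc D m f v.val (m + f + i.val) from arc_FB (by omega) hv1 (by omega)
    · refine le_ncard (fun i => ⟨if (v : ℕ) + d ≤ m + f + 2*D then (v : ℕ) + 1 + i.val
        else m + f + i.val, by have := i.isLt; split_ifs <;> omega⟩) ?_ ?_
      · intro i j h
        have hh := congrArg Fin.val h
        simp only at hh
        split_ifs at hh <;> exact Fin.ext (by have := i.isLt; have := j.isLt; omega)
      · intro i
        have hi := i.isLt
        simp only [Set.mem_setOf_eq]
        refine arc_same ?_ ?_ ?_
        · rw [pt2.2 (by omega), pt2.2 (by split_ifs <;> omega)]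
        · rw [pt2.2 (by omega)]; omega
        · split_ifs with h <;> [left; right] <;> constructor <;> omega

end TTaux

/-- For every `k ≥ 1` and every `d` there is a `(2k-2)`-strong tournament with
minimum in- and out-degree at least `d` that is not `k`-linked. -/
theorem exists_2k_sub_2_strong_tournament_high_degrees_not_k_linked
    (k : ℕ) (hk : 1 ≤ k) (d : ℕ) :
    ∃ n : ℕ, ∃ A : Fin n → Fin n → Prop,
      IsTournament A ∧ IsKStrong A (2 * k - 2) ∧
      (∀ v, d ≤ inDeg A v) ∧ (∀ v, d ≤ outDeg A v) ∧
      ¬ IsKLinked A k := by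
  refine ⟨(2*(2*d+k+2)+1) + (2*k-2) + (2*(2*d+k+2)+1),
    fun u w => TTaux.arc (2*d+k+2) (2*(2*d+k+2)+1) (2*k-2) u.val w.val,
    TTaux.tourney _ _ _ _,
    TTaux.strong k d _ _ _ _ rfl rfl rfl rfl hk,
    fun v => TTaux.indeg_ge k d _ _ _ _ rfl rfl rfl rfl v,
    fun v => TTaux.outdeg_ge k d _ _ _ _ rfl rfl rfl rfl v,
    TTaux.notlinked k d _ _ _ _ rfl rfl rfl rfl hk⟩
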